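/- arXiv:1512.02681 — 3 statements merged into one kernel-verified Lean document; each statement's English description precedes it below -/
import Mathlib

section
/- Let (α_n)_{n≥1} be a sequence of nonnegative reals and suppose there exists d' > 0 such that ∑_{k=1}^n log(1+α_k) ≤ d' · log(n+1) for all n ≥ 1. Then for every β ∈ (0,1), the set E_β = {n ∈ ℕ : α_n > n^{-β}} has natural density zero, i.e. (1/n)·#([1,n] ∩ E_β) → 0 as n → ∞. -/
open Filter
open scoped Classical

/-- If `∑_{k=1}^n log(1+α_k) ≤ d' log(n+1)` for all `n ≥ 1` with `α_k ≥ 0`, then for every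
`β ∈ (0,1)` the set `E_β = {n : α_n > n^{-β}}` has natural density zero. -/
theorem density_zero_of_log_growth
    (α : ℕ → ℝ) (hα : ∀ n, 0 ≤ α n) (d' : ℝ) (hd' : 0 < d')
    (hsum : ∀ n : ℕ, 1 ≤ n →
      ∑ k ∈ Finset.Icc 1 n, Real.log (1 + α k) ≤ d' * Real.log (n + 1))
    (β : ℝ) (hβ : β ∈ Set.Ioo (0 : ℝ) 1) :
    Tendsto (fun n : ℕ =>
        (((Finset.Icc 1 n).filter (fun k : ℕ => ((k : ℝ)) ^ (-β) < α k)).card : ℝ) / n)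
      atTop (nhds 0) := by
  obtain ⟨hβ0, hβ1⟩ := hβ
  set g : ℕ → ℝ := fun n =>
    2 * d' * (2:ℝ) ^ (1-β) * (Real.log ((n:ℝ)+1) / ((n:ℝ)+1) ^ (1-β)) with hg
  have hglim : Tendsto g atTop (nhds 0) := by
    have h1 : Tendsto (fun x : ℝ => Real.log x / x ^ (1-β)) atTop (nhds 0) :=
      (isLittleO_log_rpow_atTop (by linarith : (0:ℝ) < 1-β)).tendsto_div_nhds_zero
    have h2 : Tendsto (fun n : ℕ => (n:ℝ)+1) atTop atTop :=
      tendsto_atTop_add_const_right _ 1 tendsto_natCast_atTop_atTop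
    have := (h1.comp h2).const_mul (2 * d' * (2:ℝ) ^ (1-β))
    simpa using this
  apply tendsto_of_tendsto_of_tendsto_of_le_of_le' tendsto_const_nhds hglim
  · filter_upwards with n
    positivity
  · filter_upwards [eventually_ge_atTop 1] with n hn
    have np : (0:ℝ) < n := by exact_mod_cast hn
    have h1n : (1:ℝ) ≤ n := by exact_mod_cast hn
    set C := (Finset.Icc 1 n).filter (fun k : ℕ => ((k : ℝ)) ^ (-β) < α k) with hC
    set x := (n:ℝ) ^ (-β) with hx
    have hx0 : 0 < x := Real.rpow_pos_of_pos np _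
    have hx1 : x ≤ 1 := by
      have : (n:ℝ) ^ (-β) ≤ (1:ℝ) ^ (-β) :=
        Real.rpow_le_rpow_of_nonpos one_pos (by exact_mod_cast hn) (by linarith)
      simpa using this
    have hlogx : x / 2 ≤ Real.log (1 + x) := by
      have h1 : 1 - (1+x)⁻¹ ≤ Real.log (1+x) :=
        Real.one_sub_inv_le_log_of_pos (by linarith)
      have h2 : (1+x)⁻¹ * (1+x) = 1 := inv_mul_cancel₀ (by linarith)
      nlinarith [inv_pos.mpr (show (0:ℝ) < 1+x by linarith)]
    -- main counting inequality
    have hterm : ∀ k ∈ C, Real.log (1 + x) ≤ Real.log (1 + α k) := by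
      intro k hk
      rw [hC, Finset.mem_filter, Finset.mem_Icc] at hk
      have hk1 : (1:ℝ) ≤ k := by exact_mod_cast hk.1.1
      have hkn : (k:ℝ) ≤ n := by exact_mod_cast hk.1.2
      have hxk : x ≤ (k:ℝ) ^ (-β) :=
        Real.rpow_le_rpow_of_nonpos (by linarith) hkn (by linarith)
      have : 1 + x ≤ 1 + α k := by
        have := hk.2
        linarith
      exact Real.log_le_log (by linarith) this
    have hcount : (C.card : ℝ) * Real.log (1 + x) ≤ d' * Real.log ((n:ℝ)+1) := by
      have h1 : (C.card : ℝ) * Real.log (1 + x) = ∑ _k ∈ C, Real.log (1 + x) := by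
        rw [Finset.sum_const, nsmul_eq_mul]
      have h2 : ∑ k ∈ C, Real.log (1 + x) ≤ ∑ k ∈ C, Real.log (1 + α k) :=
        Finset.sum_le_sum hterm
      have h3 : ∑ k ∈ C, Real.log (1 + α k) ≤ ∑ k ∈ Finset.Icc 1 n, Real.log (1 + α k) :=
        Finset.sum_le_sum_of_subset_of_nonneg (Finset.filter_subset _ _)
          (fun k _ _ => Real.log_nonneg (by linarith [hα k]))
      calc (C.card : ℝ) * Real.log (1 + x) = ∑ _k ∈ C, Real.log (1 + x) := h1
        _ ≤ ∑ k ∈ Finset.Icc 1 n, Real.log (1 + α k) := h2.trans h3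
        _ ≤ d' * Real.log ((n:ℝ)+1) := hsum n hn
    have hlogn : 0 ≤ Real.log ((n:ℝ)+1) := Real.log_nonneg (by linarith)
    -- card ≤ 2 d' log(n+1) / x
    have hcard : (C.card : ℝ) ≤ 2 * d' * Real.log ((n:ℝ)+1) / x := by
      rw [le_div_iff₀ hx0]
      have hc0 : (0:ℝ) ≤ (C.card : ℝ) := Nat.cast_nonneg _
      nlinarith [mul_le_mul_of_nonneg_left hlogx hc0]
    -- convert to the g bound
    have hxinv : 1 / x = (n:ℝ) ^ β := by
      rw [hx, Real.rpow_neg np.le, one_div, inv_inv]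
    have hA : (0:ℝ) < (n:ℝ) ^ (1-β) := Real.rpow_pos_of_pos np _
    have hB : (0:ℝ) < ((n:ℝ)+1) ^ (1-β) := Real.rpow_pos_of_pos (by linarith) _
    have hAB : ((n:ℝ)+1) ^ (1-β) ≤ (2:ℝ) ^ (1-β) * (n:ℝ) ^ (1-β) := by
      rw [← Real.mul_rpow (by norm_num) np.le]
      exact Real.rpow_le_rpow (by linarith) (by linarith) (by linarith)
    have hinv : 1 / (n:ℝ) ^ (1-β) ≤ (2:ℝ) ^ (1-β) / ((n:ℝ)+1) ^ (1-β) := by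
      rw [div_le_div_iff₀ hA hB]; linarith
    have hmul : (n:ℝ) ^ β * (n:ℝ) ^ (1-β) = n := by
      rw [← Real.rpow_add np]
      norm_num
    have hnb : (n:ℝ) ^ β / n = 1 / (n:ℝ) ^ (1-β) := by
      rw [div_eq_div_iff np.ne' hA.ne', one_mul, hmul]
    calc (C.card : ℝ) / n ≤ (2 * d' * Real.log ((n:ℝ)+1) / x) / n := by gcongr
      _ = 2 * d' * Real.log ((n:ℝ)+1) * ((n:ℝ) ^ β / n) := by
          rw [← hxinv]; ring
      _ = 2 * d' * Real.log ((n:ℝ)+1) * (1 / (n:ℝ) ^ (1-β)) := by rw [hnb]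
      _ ≤ 2 * d' * Real.log ((n:ℝ)+1) * ((2:ℝ) ^ (1-β) / ((n:ℝ)+1) ^ (1-β)) := by
          exact mul_le_mul_of_nonneg_left hinv (by positivity)
      _ = g n := by rw [hg]; ring
end

section
/- Let (α_n)_{n≥1} be a sequence of nonnegative reals with ∑_{k=1}^n log(1+α_k) ≤ d' · log(n+1) for all n ≥ 1 and some constant d' > 0. Fix β ∈ (0,1) and γ > 1/β, and let E_β = {n : α_n > n^{-β}}. Then the set F_{β,γ} = {n ∈ ℕ : every integer k with n^γ ≤ k ≤ (n+1)^γ lies in E_β} has natural density zero. -/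
open Filter
open scoped Classical

private lemma half_le_log_one_add {x : ℝ} (h0 : 0 ≤ x) (h1 : x ≤ 1) :
    x / 2 ≤ Real.log (1 + x) := by
  rw [Real.le_log_iff_exp_le (by linarith : (0:ℝ) < 1 + x)]
  have h := Real.add_one_le_exp (-(x / 2))
  have hmul : Real.exp (x / 2) * Real.exp (-(x / 2)) = 1 := by
    rw [← Real.exp_add]; norm_num
  nlinarith [Real.exp_pos (x / 2), Real.exp_pos (-(x / 2))]

set_option maxHeartbeats 2000000 in
/-- Under the logarithmic growth bound on `∑ log(1+α_k)`, for `β ∈ (0,1)` and `γ > 1/β`,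
the set `F_{β,γ}` of `n` such that every integer `k` with `n^γ ≤ k ≤ (n+1)^γ` lies in
`E_β = {k : α_k > k^{-β}}` has natural density zero. -/
theorem density_zero_of_gap_set
    (α : ℕ → ℝ) (hα : ∀ n, 0 ≤ α n) (d' : ℝ) (hd' : 0 < d')
    (hsum : ∀ n : ℕ, 1 ≤ n →
      ∑ k ∈ Finset.Icc 1 n, Real.log (1 + α k) ≤ d' * Real.log (n + 1))
    (β γ : ℝ) (hβ : β ∈ Set.Ioo (0 : ℝ) 1) (hγ : 1 / β < γ) :
    Tendsto (fun n : ℕ =>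
        (((Finset.Icc 1 n).filter (fun m =>
            ∀ k : ℕ, (m : ℝ) ^ γ ≤ k → (k : ℝ) ≤ ((m : ℝ) + 1) ^ γ →
              (k : ℝ) ^ (-β) < α k)).card : ℝ) / n)
      atTop (nhds 0) := by
  obtain ⟨hβ0, hβ1⟩ := hβ
  have hβinv : 1 < 1 / β := by rw [lt_div_iff₀ hβ0]; linarith
  have hγ1 : 1 < γ := hβinv.trans hγ
  have hγ0 : 0 < γ := by linarith
  have hEq : (fun n : ℕ =>
        (((Finset.Icc 1 n).filter (fun m =>
            ∀ k : ℕ, (m : ℝ) ^ γ ≤ k → (k : ℝ) ≤ ((m : ℝ) + 1) ^ γ →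
              (k : ℝ) ^ (-β) < α k)).card : ℝ) / n)
      = (fun n : ℕ =>
        (((Finset.Icc 1 n).filter (fun m : ℕ =>
            ∀ k : ℕ, ((m : ℕ) : ℝ) ^ γ ≤ k → (k : ℝ) ≤ (((m : ℕ) : ℝ) + 1) ^ γ →
              (k : ℝ) ^ (-β) < α k)).card : ℝ) / n) := by
    funext n
    have hconv : ((Finset.Icc 1 n : Finset ℕ) : Finset ℝ)
        = Finset.image (Nat.cast : ℕ → ℝ) (Finset.Icc 1 n) := by
      simp only [Finset.pure_def, Finset.bind_def, Finset.sup_singleton_apply]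
    rw [hconv, Finset.filter_image, Finset.card_image_of_injective _ Nat.cast_injective]
  rw [hEq]
  set P : ℕ → Prop := fun m =>
    ∀ k : ℕ, (m : ℝ) ^ γ ≤ k → (k : ℝ) ≤ ((m : ℝ) + 1) ^ γ → (k : ℝ) ^ (-β) < α k with hP
  set e : ℝ := γ * (1 - β) - 1 with he
  have he1 : -1 < e := by
    have : 0 < γ * (1 - β) := mul_pos hγ0 (by linarith)
    simp only [he]; linarith
  set e' : ℝ := min e 0 with he'
  have he'0 : e' ≤ 0 := min_le_right _ _
  have he'e : e' ≤ e := min_le_left _ _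
  have he'1 : -1 < e' := lt_min he1 (by norm_num)
  have hs : 0 < 1 + e' := by linarith
  set c : ℝ := γ / 4 * (2:ℝ) ^ (-(γ * β)) with hc
  have hcpos : 0 < c := by
    apply mul_pos (by linarith) (Real.rpow_pos_of_pos two_pos _)
  set m0 : ℕ := max 1 ⌈((2:ℝ) / γ) ^ ((γ - 1)⁻¹)⌉₊ with hm0
  have hm01 : 1 ≤ m0 := le_max_left _ _
  have hm0ge : ∀ m : ℕ, m0 ≤ m → 2 ≤ γ * (m : ℝ) ^ (γ - 1) := by
    intro m hm
    have hm1 : (1:ℝ) ≤ m := by exact_mod_cast le_trans hm01 hm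
    have h1 : ((2:ℝ) / γ) ^ ((γ - 1)⁻¹) ≤ (m : ℝ) :=
      le_trans (Nat.le_ceil _) (Nat.cast_le.mpr (le_trans (le_max_right _ _) hm))
    have ht : (2:ℝ) / γ ≤ (m : ℝ) ^ (γ - 1) := by
      calc (2:ℝ) / γ = (((2:ℝ) / γ) ^ ((γ - 1)⁻¹)) ^ (γ - 1) := by
            rw [← Real.rpow_mul (by positivity : (0:ℝ) ≤ 2 / γ),
              inv_mul_cancel₀ (ne_of_gt (by linarith : (0:ℝ) < γ - 1)), Real.rpow_one]
        _ ≤ (m : ℝ) ^ (γ - 1) :=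
            Real.rpow_le_rpow (Real.rpow_nonneg (by positivity) _) h1 (by linarith)
    have := (div_le_iff₀ hγ0).mp ht
    linarith
  set I : ℕ → Finset ℕ := fun m => Finset.Ico ⌈(m:ℝ)^γ⌉₊ ⌈((m:ℝ)+1)^γ⌉₊ with hI
  -- per-m lower bound on the sum of logs over I m
  have keyA : ∀ m : ℕ, m0 ≤ m → P m →
      c * (m:ℝ) ^ e ≤ ∑ k ∈ I m, Real.log (1 + α k) := by
    intro m hm hPm
    have hm1 : (1:ℝ) ≤ m := by exact_mod_cast le_trans hm01 hm
    have hmp : (0:ℝ) < m := by linarith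
    have hk : ∀ k ∈ I m,
        1/2 * ((2:ℝ)^(-(γ*β)) * (m:ℝ)^(-(γ*β))) ≤ Real.log (1 + α k) := by
      intro k hk
      obtain ⟨hka, hkb⟩ := Finset.mem_Ico.mp hk
      have hklo : (m:ℝ)^γ ≤ (k:ℝ) := le_trans (Nat.le_ceil _) (Nat.cast_le.mpr hka)
      have hkhi : (k:ℝ) < ((m:ℝ)+1)^γ := Nat.lt_ceil.mp hkb
      have hk1 : (1:ℝ) ≤ (k:ℝ) := le_trans (Real.one_le_rpow hm1 hγ0.le) hklo
      have hkpos : (0:ℝ) < (k:ℝ) := by linarith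
      have hαk := hPm k hklo hkhi.le
      have hx1 : (k:ℝ)^(-β) ≤ 1 := Real.rpow_le_one_of_one_le_of_nonpos hk1 (by linarith)
      have hx0 : 0 ≤ (k:ℝ)^(-β) := Real.rpow_nonneg hkpos.le _
      have hhalf : (k:ℝ)^(-β)/2 ≤ Real.log (1 + (k:ℝ)^(-β)) := half_le_log_one_add hx0 hx1
      have hmono : Real.log (1 + (k:ℝ)^(-β)) ≤ Real.log (1 + α k) :=
        Real.log_le_log (by positivity) (by linarith)
      have hk2m : (k:ℝ) ≤ (2*(m:ℝ))^γ :=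
        le_trans hkhi.le (Real.rpow_le_rpow (by positivity) (by linarith) hγ0.le)
      have hlow : ((2*(m:ℝ))^γ) ^ (-β) ≤ (k:ℝ)^(-β) := by
        exact Real.rpow_le_rpow_of_nonpos hkpos hk2m (by linarith)
      have heq : ((2*(m:ℝ))^γ) ^ (-β) = (2:ℝ)^(-(γ*β)) * (m:ℝ)^(-(γ*β)) := by
        rw [← Real.rpow_mul (by positivity), Real.mul_rpow (by norm_num) hmp.le]
        ring_nf
      rw [heq] at hlow
      linarith
    have hab : ⌈(m:ℝ)^γ⌉₊ ≤ ⌈((m:ℝ)+1)^γ⌉₊ :=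
      Nat.ceil_le_ceil (Real.rpow_le_rpow (by positivity) (by linarith) hγ0.le)
    have hcard : γ/2 * (m:ℝ)^(γ-1) ≤ ((I m).card : ℝ) := by
      have hber : (m:ℝ)^γ + γ * (m:ℝ)^(γ-1) ≤ ((m:ℝ)+1)^γ := by
        have hfac : ((m:ℝ)+1) = m * (1 + 1/m) := by field_simp
        have hinv0 : (0:ℝ) ≤ 1/m := by positivity
        have h3 : (1 + γ * (1/(m:ℝ))) ≤ (1 + 1/(m:ℝ))^γ :=
          one_add_mul_self_le_rpow_one_add (by linarith) hγ1.le
        calc (m:ℝ)^γ + γ * (m:ℝ)^(γ-1) = (m:ℝ)^γ * (1 + γ*(1/(m:ℝ))) := by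
              rw [Real.rpow_sub hmp, Real.rpow_one]; field_simp
          _ ≤ (m:ℝ)^γ * (1 + 1/(m:ℝ))^γ :=
              mul_le_mul_of_nonneg_left h3 (Real.rpow_nonneg hmp.le _)
          _ = ((m:ℝ)+1)^γ := by
              rw [hfac, Real.mul_rpow hmp.le (by positivity)]
      have h1 : ((m:ℝ)+1)^γ ≤ (⌈((m:ℝ)+1)^γ⌉₊ : ℝ) := Nat.le_ceil _
      have h2 : (⌈(m:ℝ)^γ⌉₊ : ℝ) < (m:ℝ)^γ + 1 := Nat.ceil_lt_add_one (by positivity)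
      have h2g := hm0ge m hm
      have hcc : (I m).card = ⌈((m:ℝ)+1)^γ⌉₊ - ⌈(m:ℝ)^γ⌉₊ := Nat.card_Ico _ _
      rw [hcc, Nat.cast_sub hab]
      linarith
    have hmm : (m:ℝ)^(γ-1) * (m:ℝ)^(-(γ*β)) = (m:ℝ)^e := by
      rw [← Real.rpow_add hmp]; congr 1; simp only [he]; ring
    have hsum' := Finset.card_nsmul_le_sum (I m) (fun k => Real.log (1 + α k))
      (1/2 * ((2:ℝ)^(-(γ*β)) * (m:ℝ)^(-(γ*β)))) hk
    rw [nsmul_eq_mul] at hsum'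
    have hb0 : (0:ℝ) ≤ 1/2 * ((2:ℝ)^(-(γ*β)) * (m:ℝ)^(-(γ*β))) := by positivity
    calc c * (m:ℝ)^e = (γ/2 * (m:ℝ)^(γ-1)) * (1/2 * ((2:ℝ)^(-(γ*β)) * (m:ℝ)^(-(γ*β)))) := by
          rw [hc, ← hmm]; ring
      _ ≤ ((I m).card : ℝ) * (1/2 * ((2:ℝ)^(-(γ*β)) * (m:ℝ)^(-(γ*β)))) :=
          mul_le_mul_of_nonneg_right hcard hb0
      _ ≤ ∑ k ∈ I m, Real.log (1 + α k) := hsum'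
  -- counting bound for the tail set
  have keyCard : ∀ n : ℕ, m0 ≤ n →
      c * ((((Finset.Icc m0 n).filter P).card : ℝ)) * (n:ℝ)^e' ≤
        d' * (γ + 1) * Real.log ((n:ℝ) + 1) := by
    intro n hn
    set S := (Finset.Icc m0 n).filter P with hS
    have hn1 : 1 ≤ n := le_trans hm01 hn
    have hnR : (1:ℝ) ≤ n := by exact_mod_cast hn1
    have hnpos : (0:ℝ) < n := by linarith
    set N : ℕ := ⌈((n:ℝ)+1)^γ⌉₊ with hN
    have hN1 : 1 ≤ N := Nat.one_le_ceil_iff.mpr (by positivity)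
    -- step 1 : pointwise
    have step1 : (S.card : ℝ) * (c * (n:ℝ)^e') ≤
        ∑ m ∈ S, ∑ k ∈ I m, Real.log (1 + α k) := by
      have := Finset.card_nsmul_le_sum S (fun m => ∑ k ∈ I m, Real.log (1 + α k))
        (c * (n:ℝ)^e') ?_
      · rwa [nsmul_eq_mul] at this
      · intro m hm
        obtain ⟨hmIcc, hmP⟩ := Finset.mem_filter.mp hm
        obtain ⟨hm0m, hmn⟩ := Finset.mem_Icc.mp hmIcc
        have hm1 : (1:ℝ) ≤ m := by exact_mod_cast le_trans hm01 hm0m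
        have hmp : (0:ℝ) < m := by linarith
        have h1 : (n:ℝ)^e' ≤ (m:ℝ)^e' :=
          Real.rpow_le_rpow_of_nonpos hmp (by exact_mod_cast hmn) he'0
        have h2 : (m:ℝ)^e' ≤ (m:ℝ)^e := Real.rpow_le_rpow_of_exponent_le hm1 he'e
        calc c * (n:ℝ)^e' ≤ c * (m:ℝ)^e := by
              apply mul_le_mul_of_nonneg_left (le_trans h1 h2) hcpos.le
          _ ≤ ∑ k ∈ I m, Real.log (1 + α k) := keyA m hm0m hmP
    -- step 2 : disjointness
    have hlt : ∀ p q : ℕ, p < q → Disjoint (I p) (I q) := by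
      intro p q hpq
      apply Finset.disjoint_left.mpr
      intro k hk1 hk2
      have h1 : k < ⌈((p:ℝ)+1)^γ⌉₊ := (Finset.mem_Ico.mp hk1).2
      have h2 : ⌈((q:ℝ))^γ⌉₊ ≤ k := (Finset.mem_Ico.mp hk2).1
      have hpq' : ((p:ℝ)+1) ≤ (q:ℝ) := by exact_mod_cast hpq
      have h3 : ⌈((p:ℝ)+1)^γ⌉₊ ≤ ⌈((q:ℝ))^γ⌉₊ :=
        Nat.ceil_le_ceil (Real.rpow_le_rpow (by positivity) hpq' hγ0.le)
      omega
    have hdisj : Set.PairwiseDisjoint (↑S : Set ℕ) I := by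
      intro x _ y _ hxy
      rcases lt_or_gt_of_ne hxy with h | h
      · exact hlt x y h
      · exact (hlt y x h).symm
    have step2 : ∑ m ∈ S, ∑ k ∈ I m, Real.log (1 + α k) =
        ∑ k ∈ S.biUnion I, Real.log (1 + α k) := (Finset.sum_biUnion hdisj).symm
    -- step 3 : inclusion
    have hsub : S.biUnion I ⊆ Finset.Icc 1 N := by
      intro k hk
      obtain ⟨m, hmS, hkI⟩ := Finset.mem_biUnion.mp hk
      obtain ⟨hmIcc, _⟩ := Finset.mem_filter.mp hmS
      obtain ⟨hm0m, hmn⟩ := Finset.mem_Icc.mp hmIcc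
      have hm1 : (1:ℝ) ≤ m := by exact_mod_cast le_trans hm01 hm0m
      obtain ⟨hka, hkb⟩ := Finset.mem_Ico.mp hkI
      have hk1 : 1 ≤ k := by
        have : 1 ≤ ⌈(m:ℝ)^γ⌉₊ := Nat.one_le_ceil_iff.mpr (by positivity)
        omega
      have hmn' : ((m:ℝ)+1) ≤ ((n:ℝ)+1) := by
        have : (m:ℝ) ≤ (n:ℝ) := by exact_mod_cast hmn
        linarith
      have h3 : ⌈((m:ℝ)+1)^γ⌉₊ ≤ N :=
        Nat.ceil_le_ceil (Real.rpow_le_rpow (by positivity) hmn' hγ0.le)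
      exact Finset.mem_Icc.mpr ⟨hk1, by omega⟩
    have step3 : ∑ k ∈ S.biUnion I, Real.log (1 + α k) ≤
        ∑ k ∈ Finset.Icc 1 N, Real.log (1 + α k) := by
      apply Finset.sum_le_sum_of_subset_of_nonneg hsub
      intro k _ _
      exact Real.log_nonneg (by linarith [hα k])
    have step4 := hsum N hN1
    -- step 5 : log (N+1) ≤ (γ+1) log (n+1)
    have step5 : Real.log ((N:ℝ) + 1) ≤ (γ + 1) * Real.log ((n:ℝ) + 1) := by
      have hx2 : (2:ℝ) ≤ ((n:ℝ)+1)^γ := by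
        calc (2:ℝ) = (2:ℝ)^(1:ℝ) := (Real.rpow_one 2).symm
          _ ≤ (2:ℝ)^γ := Real.rpow_le_rpow_of_exponent_le one_le_two hγ1.le
          _ ≤ ((n:ℝ)+1)^γ := Real.rpow_le_rpow (by norm_num) (by linarith) hγ0.le
      have hNlt : (N:ℝ) < ((n:ℝ)+1)^γ + 1 := Nat.ceil_lt_add_one (by positivity)
      have hle : (N:ℝ) + 1 ≤ ((n:ℝ)+1)^(γ+1) := by
        have : ((n:ℝ)+1)^(γ+1) = ((n:ℝ)+1)^γ * ((n:ℝ)+1) := by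
          rw [Real.rpow_add (by linarith), Real.rpow_one]
        rw [this]
        nlinarith
      calc Real.log ((N:ℝ) + 1) ≤ Real.log (((n:ℝ)+1)^(γ+1)) :=
            Real.log_le_log (by positivity) hle
        _ = (γ + 1) * Real.log ((n:ℝ)+1) := Real.log_rpow (by linarith) _
    calc c * (S.card : ℝ) * (n:ℝ)^e' = (S.card : ℝ) * (c * (n:ℝ)^e') := by ring
      _ ≤ ∑ m ∈ S, ∑ k ∈ I m, Real.log (1 + α k) := step1
      _ = ∑ k ∈ S.biUnion I, Real.log (1 + α k) := step2
      _ ≤ ∑ k ∈ Finset.Icc 1 N, Real.log (1 + α k) := step3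
      _ ≤ d' * Real.log ((N:ℝ) + 1) := step4
      _ ≤ d' * ((γ + 1) * Real.log ((n:ℝ) + 1)) :=
          mul_le_mul_of_nonneg_left step5 hd'.le
      _ = d' * (γ + 1) * Real.log ((n:ℝ) + 1) := by ring
  -- final assembly
  set K : ℝ := d' * (γ + 1) / c with hK
  have hK0 : 0 ≤ K := by positivity
  have hbound : ∀ n : ℕ, m0 ≤ n →
      (((Finset.Icc 1 n).filter P).card : ℝ) / n ≤
        (m0 : ℝ) / n + 2 * K * (Real.log ((n:ℝ)+1) / ((n:ℝ)+1)^(1+e')) := by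
    intro n hn
    have hn1 : 1 ≤ n := le_trans hm01 hn
    have hnR : (1:ℝ) ≤ n := by exact_mod_cast hn1
    have hnpos : (0:ℝ) < n := by linarith
    have hxpos : (0:ℝ) < (n:ℝ)+1 := by linarith
    have hlogpos : 0 ≤ Real.log ((n:ℝ)+1) := Real.log_nonneg (by linarith)
    set S := (Finset.Icc m0 n).filter P with hSdef
    have hcardle : ((Finset.Icc 1 n).filter P).card ≤ m0 + S.card := by
      have hsub : (Finset.Icc 1 n).filter P ⊆ Finset.range m0 ∪ S := by
        intro m hm
        obtain ⟨hmIcc, hmP⟩ := Finset.mem_filter.mp hm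
        obtain ⟨h1m, hmn⟩ := Finset.mem_Icc.mp hmIcc
        rcases lt_or_ge m m0 with h | h
        · exact Finset.mem_union_left _ (Finset.mem_range.mpr h)
        · exact Finset.mem_union_right _
            (Finset.mem_filter.mpr ⟨Finset.mem_Icc.mpr ⟨h, hmn⟩, hmP⟩)
      calc ((Finset.Icc 1 n).filter P).card ≤ (Finset.range m0 ∪ S).card :=
            Finset.card_le_card hsub
        _ ≤ (Finset.range m0).card + S.card := Finset.card_union_le _ _
        _ = m0 + S.card := by rw [Finset.card_range]
    have hne' : (0:ℝ) < (n:ℝ)^e' := Real.rpow_pos_of_pos hnpos _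
    have hc0 : c ≠ 0 := ne_of_gt hcpos
    have hn0 : (n:ℝ)^e' ≠ 0 := ne_of_gt hne'
    have hScard : (S.card : ℝ) ≤ K * Real.log ((n:ℝ)+1) * ((n:ℝ)^e')⁻¹ := by
      have h := keyCard n hn
      calc (S.card:ℝ) = c * (S.card:ℝ) * (n:ℝ)^e' * (c⁻¹ * ((n:ℝ)^e')⁻¹) := by
            field_simp
        _ ≤ d' * (γ+1) * Real.log ((n:ℝ)+1) * (c⁻¹ * ((n:ℝ)^e')⁻¹) :=
            mul_le_mul_of_nonneg_right h (by positivity)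
        _ = K * Real.log ((n:ℝ)+1) * ((n:ℝ)^e')⁻¹ := by
            rw [hK, div_eq_mul_inv]; ring
    -- combine
    have hinv : ((n:ℝ)^e')⁻¹ = (n:ℝ)^(-e') := by
      rw [← Real.rpow_neg hnpos.le]
    have hmono1 : (n:ℝ)^(-e') ≤ ((n:ℝ)+1)^(-e') :=
      Real.rpow_le_rpow hnpos.le (by linarith) (by linarith)
    have hfrac : (1:ℝ)/n ≤ 2/((n:ℝ)+1) := by
      rw [div_le_div_iff₀ hnpos hxpos]; linarith
    have hSn : (S.card : ℝ) / n ≤ 2 * K * (Real.log ((n:ℝ)+1) / ((n:ℝ)+1)^(1+e')) := by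
      have hS2 : (S.card : ℝ) ≤ K * Real.log ((n:ℝ)+1) * ((n:ℝ)+1)^(-e') := by
        refine le_trans hScard ?_
        rw [hinv]
        exact mul_le_mul_of_nonneg_left hmono1 (by positivity)
      have hrpow : ((n:ℝ)+1)^(-e') * (((n:ℝ)+1))⁻¹ = (((n:ℝ)+1)^(1+e'))⁻¹ := by
        rw [← Real.rpow_neg_one ((n:ℝ)+1), ← Real.rpow_add hxpos,
          ← Real.rpow_neg hxpos.le]
        congr 1; ring
      calc (S.card : ℝ) / n = (S.card : ℝ) * (1/n) := by ring
        _ ≤ (K * Real.log ((n:ℝ)+1) * ((n:ℝ)+1)^(-e')) * (2/((n:ℝ)+1)) := by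
            apply mul_le_mul hS2 hfrac (by positivity) (by positivity)
        _ = 2 * K * (Real.log ((n:ℝ)+1) * (((n:ℝ)+1)^(-e') * (((n:ℝ)+1))⁻¹)) := by
            ring
        _ = 2 * K * (Real.log ((n:ℝ)+1) / ((n:ℝ)+1)^(1+e')) := by
            rw [hrpow]; ring
    have hc2 : (((Finset.Icc 1 n).filter P).card : ℝ) ≤ (m0:ℝ) + S.card := by
      exact_mod_cast hcardle
    calc (((Finset.Icc 1 n).filter P).card : ℝ) / n ≤ ((m0:ℝ) + S.card) / n := by
          gcongr
        _ = (m0:ℝ)/n + (S.card:ℝ)/n := by ring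
        _ ≤ (m0:ℝ)/n + 2 * K * (Real.log ((n:ℝ)+1) / ((n:ℝ)+1)^(1+e')) := by
          linarith
  have hg0 : Tendsto (fun n : ℕ =>
      (m0 : ℝ) / n + 2 * K * (Real.log ((n:ℝ)+1) / ((n:ℝ)+1)^(1+e')))
      atTop (nhds 0) := by
    have h1 : Tendsto (fun n : ℕ => (m0 : ℝ) / n) atTop (nhds 0) :=
      tendsto_const_div_atTop_nhds_zero_nat _
    have h2 : Tendsto (fun x : ℝ => Real.log x / x ^ (1+e')) atTop (nhds 0) :=
      (isLittleO_log_rpow_atTop hs).tendsto_div_nhds_zero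
    have h3 : Tendsto (fun n : ℕ => (n:ℝ)+1) atTop atTop :=
      tendsto_atTop_add_const_right _ 1 tendsto_natCast_atTop_atTop
    have h4 := (h2.comp h3).const_mul (2*K)
    have := h1.add h4
    simpa using this
  apply squeeze_zero' (Eventually.of_forall fun n => by positivity) ?_ hg0
  filter_upwards [eventually_ge_atTop m0] with n hn using hbound n hn
end

section
/- Let G be a group and K ⊆ G a generating set containing the identity. Suppose ℓ : G → [0,∞) satisfies: (i) ℓ is a uniform limit on each K^p of partial sums ∑_{n∈A, n≤N}(1-ω_n), where each ω_n vanishes outside K^{2⌈(n+1)^γ⌉} and 0 ≤ ω_n ≤ 1; then for s ∉ K^{2m} with m ≥ ⌊(N+1)^γ⌋, one has ℓ(s) ≥ #{n ∈ A : n ≤ N}. -/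
open Filter
open scoped Pointwise Classical

/-- Properness estimate in the proof of Theorem 1.1: if `ℓ` is the uniform limit on each `K^p`
of the partial sums `∑_{n ∈ A, n ≤ N} (1 - ω_n)`, where `0 ≤ ω_n ≤ 1` and `ω_n` vanishes
outside `K^{2 k(n)}` with `k(n) ≤ (n+1)^γ`, then for `s ∉ K^{2m}` with
`m ≥ ⌊(N+1)^γ⌋` one has `ℓ(s) ≥ #{n ∈ A : n ≤ N}`. -/
theorem properness_lower_bound
    {G : Type*} [Group G] (K : Set G) (hone : (1 : G) ∈ K)
    (hgen : ∀ g : G, ∃ p : ℕ, g ∈ K ^ p)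
    (ω : ℕ → G → ℝ) (hbdd : ∀ n s, 0 ≤ ω n s ∧ ω n s ≤ 1)
    (γ : ℝ) (hγ : 0 < γ) (A : Set ℕ)
    (k : ℕ → ℕ) (hk : ∀ n : ℕ, (k n : ℝ) ≤ ((n : ℝ) + 1) ^ γ)
    (hsupp : ∀ n : ℕ, ∀ s : G, s ∉ K ^ (2 * k n) → ω n s = 0)
    (ℓ : G → ℝ)
    (hconv : ∀ p : ℕ, TendstoUniformlyOn
      (fun N s => ∑ n ∈ (Finset.range (N + 1)).filter (· ∈ A), (1 - ω n s)) ℓ atTop (K ^ p)) :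
    ∀ (N m : ℕ), ⌊(((N : ℝ) + 1) ^ γ)⌋₊ ≤ m → ∀ s : G, s ∉ K ^ (2 * m) →
      (((Finset.range (N + 1)).filter (· ∈ A)).card : ℝ) ≤ ℓ s := by
  intro N m hm s hs
  obtain ⟨p, hp⟩ := hgen s
  have htend : Tendsto (fun M => ∑ n ∈ (Finset.range (M + 1)).filter (· ∈ A), (1 - ω n s))
      atTop (nhds (ℓ s)) := (hconv p).tendsto_at hp
  -- for n ≤ N, ω n s = 0
  have hω0 : ∀ n ≤ N, ω n s = 0 := by
    intro n hn
    refine hsupp n s fun hmem => hs ?_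
    have hkn : k n ≤ m := by
      refine le_trans (Nat.le_floor ?_) hm
      refine (hk n).trans (Real.rpow_le_rpow (by positivity) ?_ hγ.le)
      have : (n : ℝ) ≤ N := Nat.cast_le.2 hn
      linarith
    exact Set.pow_subset_pow_right hone (by omega) hmem
  refine ge_of_tendsto htend ?_
  filter_upwards [eventually_ge_atTop N] with M hM
  calc (((Finset.range (N + 1)).filter (· ∈ A)).card : ℝ)
      = ∑ n ∈ (Finset.range (N + 1)).filter (· ∈ A), (1 - ω n s) := by
        rw [Finset.card_eq_sum_ones]
        push_cast
        refine Finset.sum_congr rfl fun n hn => ?_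
        have : n < N + 1 := Finset.mem_range.1 (Finset.mem_filter.1 hn).1
        rw [hω0 n (by omega), sub_zero]
    _ ≤ ∑ n ∈ (Finset.range (M + 1)).filter (· ∈ A), (1 - ω n s) := by
        refine Finset.sum_le_sum_of_subset_of_nonneg ?_ fun n _ _ => ?_
        · exact Finset.filter_subset_filter _ (Finset.range_subset_range.2 (by omega))
        · linarith [(hbdd n s).2]
end
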